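/- Let f : ℝⁿ → ℝ be differentiable, attaining its global minimum value f* = f(x*) at a point x*, satisfying the Polyak–Łojasiewicz inequality f(y) − f* ≤ (1/(2σ))‖∇f(y)‖² for all y ∈ ℝⁿ with σ > 0, and additionally satisfying the quadratic growth condition f(y) − f* ≥ (ν/2)‖y − x*‖² for all y ∈ ℝⁿ, with ν > 0. Let t₀ ∈ ℝ, T_p > 0, r a positive integer, 𝒯(t) = (T_p/(T_p + t₀ − t))^r on [t₀, t₀ + T_p), and k > 0. Suppose x : [t₀, t₀ + T_p) → ℝⁿ is differentiable with ẋ(t) = −k 𝒯(t) ∇f(x(t)). Then for every t ∈ [t₀, t₀ + T_p), ‖x(t) − x*‖² ≤ (2/ν) · exp(−2σ k ∫_{t₀}^{t} 𝒯(τ) dτ) · (f(x(t₀)) − f*), and consequently x(t) → x* as t → (t₀ + T_p)⁻. -/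

import Mathlib

/-- The time-scaling function `𝒯(t) = (T_p / (T_p + t₀ - t))^r`. -/
noncomputable def Tscale (t₀ Tp : ℝ) (r : ℕ) (t : ℝ) : ℝ := (Tp / (Tp + t₀ - t)) ^ r

/-- for a PŁ function with quadratic growth, the time-varying
feedback gradient flow satisfies
`‖x(t) - x*‖² ≤ (2/ν) exp(-2σk∫_{t₀}^{t}𝒯) (f(x(t₀)) - f*)` and
`x(t) → x*` as `t → (t₀ + T_p)⁻`. -/
theorem pl_gradient_flow_state_convergence
    (n : ℕ) (f : EuclideanSpace ℝ (Fin n) → ℝ) (hf : Differentiable ℝ f)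
    (xstar : EuclideanSpace ℝ (Fin n)) (hmin : ∀ y, f xstar ≤ f y)
    (σ : ℝ) (hσ : 0 < σ)
    (hPL : ∀ y, f y - f xstar ≤ 1 / (2 * σ) * ‖gradient f y‖ ^ 2)
    (ν : ℝ) (hν : 0 < ν)
    (hQG : ∀ y, ν / 2 * ‖y - xstar‖ ^ 2 ≤ f y - f xstar)
    (t₀ Tp : ℝ) (hTp : 0 < Tp) (r : ℕ) (hr : 0 < r) (k : ℝ) (hk : 0 < k)
    (x : ℝ → EuclideanSpace ℝ (Fin n))
    (hx : ∀ t ∈ Set.Ico t₀ (t₀ + Tp),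
      HasDerivAt x (-(k * Tscale t₀ Tp r t) • gradient f (x t)) t) :
    (∀ t ∈ Set.Ico t₀ (t₀ + Tp),
      ‖x t - xstar‖ ^ 2
        ≤ 2 / ν * Real.exp (-2 * σ * k * ∫ τ in t₀..t, Tscale t₀ Tp r τ)
            * (f (x t₀) - f xstar)) ∧
    Filter.Tendsto x (nhdsWithin (t₀ + Tp) (Set.Iio (t₀ + Tp))) (nhds xstar) := by
  have hTp' : t₀ < t₀ + Tp := by linarith
  set T : ℝ → ℝ := Tscale t₀ Tp r with hTdef
  set E : ℝ → ℝ := fun t => ∫ τ in t₀..t, T τ with hEdef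
  set V : ℝ → ℝ := fun t => f (x t) - f xstar with hVdef
  -- denominator positivity
  have hden : ∀ t < t₀ + Tp, 0 < Tp + t₀ - t := fun t ht => by linarith
  have hTpos : ∀ t < t₀ + Tp, 0 < T t := by
    intro t ht
    exact pow_pos (div_pos hTp (hden t ht)) r
  have hTcont : ∀ t < t₀ + Tp, ContinuousAt T t := by
    intro t ht
    have : ContinuousAt (fun s => Tp / (Tp + t₀ - s)) t :=
      ContinuousAt.div continuousAt_const (by fun_prop) (ne_of_gt (hden t ht))
    exact this.pow r
  have hTco : ∀ t < t₀ + Tp, ContinuousOn T (Set.Icc t₀ t) := by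
    intro t ht s hs
    exact (hTcont s (lt_of_le_of_lt hs.2 ht)).continuousWithinAt
  have hTint : ∀ t ∈ Set.Ico t₀ (t₀ + Tp), IntervalIntegrable T MeasureTheory.volume t₀ t :=
    fun t ht => (hTco t ht.2).intervalIntegrable_of_Icc ht.1
  have hE : ∀ t ∈ Set.Ico t₀ (t₀ + Tp), HasDerivAt E (T t) t := by
    intro t ht
    exact intervalIntegral.integral_hasDerivAt_right (hTint t ht)
      (ContinuousAt.stronglyMeasurableAtFilter isOpen_Iio
        (fun s hs => hTcont s hs) t ht.2)
      (hTcont t ht.2)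
  -- derivative of V
  have hV : ∀ t ∈ Set.Ico t₀ (t₀ + Tp),
      HasDerivAt V (-(k * T t) * ‖gradient f (x t)‖ ^ 2) t := by
    intro t ht
    have h1 : HasDerivAt (fun s => f (x s))
        ((InnerProductSpace.toDual ℝ _ (gradient f (x t)))
          (-(k * T t) • gradient f (x t))) t :=
      ((hf (x t)).hasGradientAt.hasFDerivAt).comp_hasDerivAt t (hx t ht)
    have h2 : (InnerProductSpace.toDual ℝ _ (gradient f (x t)))
        (-(k * T t) • gradient f (x t)) = -(k * T t) * ‖gradient f (x t)‖ ^ 2 := by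
      rw [InnerProductSpace.toDual_apply_apply, real_inner_smul_right,
        real_inner_self_eq_norm_sq]
    rw [h2] at h1
    exact h1.sub_const _
  -- the Lyapunov-type function g
  set g : ℝ → ℝ := fun s => V s * Real.exp (2 * σ * k * E s) with hgdef
  have hg : ∀ t ∈ Set.Ico t₀ (t₀ + Tp),
      HasDerivAt g (-(k * T t) * ‖gradient f (x t)‖ ^ 2 * Real.exp (2 * σ * k * E t)
        + V t * (2 * σ * k * T t * Real.exp (2 * σ * k * E t))) t := by
    intro t ht
    have h := (hV t ht).mul (((hE t ht).const_mul (2 * σ * k)).exp)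
    exact h.congr_deriv (by ring)
  have hgderiv_nonpos : ∀ t ∈ Set.Ico t₀ (t₀ + Tp),
      -(k * T t) * ‖gradient f (x t)‖ ^ 2 * Real.exp (2 * σ * k * E t)
        + V t * (2 * σ * k * T t * Real.exp (2 * σ * k * E t)) ≤ 0 := by
    intro t ht
    have hpl := hPL (x t)
    have h2σ : 2 * σ * V t ≤ ‖gradient f (x t)‖ ^ 2 := by
      rw [div_mul_eq_mul_div, le_div_iff₀ (by positivity)] at hpl
      show 2 * σ * (f (x t) - f xstar) ≤ ‖gradient f (x t)‖ ^ 2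
      linarith
    have hT0 : 0 < T t := hTpos t ht.2
    have hexp : 0 < Real.exp (2 * σ * k * E t) := Real.exp_pos _
    nlinarith [mul_pos (mul_pos hk hT0) hexp]
  -- g is antitone on [t₀, t], hence g t ≤ g t₀ = V t₀
  have hgbound : ∀ t ∈ Set.Ico t₀ (t₀ + Tp), g t ≤ V t₀ := by
    intro t ht
    have hsub : Set.Icc t₀ t ⊆ Set.Ico t₀ (t₀ + Tp) :=
      fun s hs => ⟨hs.1, lt_of_le_of_lt hs.2 ht.2⟩
    have hanti : AntitoneOn g (Set.Icc t₀ t) := by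
      apply antitoneOn_of_deriv_nonpos (convex_Icc t₀ t)
      · exact fun s hs => ((hg s (hsub hs)).continuousAt).continuousWithinAt
      · rw [interior_Icc]
        exact fun s hs => ((hg s (hsub (Set.Ioo_subset_Icc_self hs))).differentiableAt).differentiableWithinAt
      · rw [interior_Icc]
        intro s hs
        have hs' := hsub (Set.Ioo_subset_Icc_self hs)
        rw [(hg s hs').deriv]
        exact hgderiv_nonpos s hs'
    have h0 : g t₀ = V t₀ := by
      have : E t₀ = 0 := intervalIntegral.integral_same
      simp [hgdef, this]
    calc g t ≤ g t₀ := hanti ⟨le_refl t₀, ht.1⟩ ⟨ht.1, le_refl t⟩ ht.1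
      _ = V t₀ := h0
  -- main inequality
  have hmain : ∀ t ∈ Set.Ico t₀ (t₀ + Tp),
      ‖x t - xstar‖ ^ 2 ≤ 2 / ν * Real.exp (-2 * σ * k * E t) * V t₀ := by
    intro t ht
    have hgb := hgbound t ht
    have hqg := hQG (x t)
    have hexp : 0 < Real.exp (2 * σ * k * E t) := Real.exp_pos _
    have h1 : ν / 2 * ‖x t - xstar‖ ^ 2 * Real.exp (2 * σ * k * E t) ≤ V t₀ := by
      calc ν / 2 * ‖x t - xstar‖ ^ 2 * Real.exp (2 * σ * k * E t)
          ≤ V t * Real.exp (2 * σ * k * E t) :=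
            mul_le_mul_of_nonneg_right hqg hexp.le
        _ = g t := rfl
        _ ≤ V t₀ := hgb
    have h2 : ‖x t - xstar‖ ^ 2 ≤ V t₀ / (ν / 2 * Real.exp (2 * σ * k * E t)) := by
      rw [le_div_iff₀ (by positivity)]
      nlinarith
    have h3 : V t₀ / (ν / 2 * Real.exp (2 * σ * k * E t))
        = 2 / ν * Real.exp (-2 * σ * k * E t) * V t₀ := by
      rw [show (-2 * σ * k * E t) = -(2 * σ * k * E t) by ring, Real.exp_neg]
      field_simp
    rw [h3] at h2
    exact h2
  refine ⟨hmain, ?_⟩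
  -- Convergence part
  set l := nhdsWithin (t₀ + Tp) (Set.Iio (t₀ + Tp)) with hldef
  have hIco_ev : ∀ᶠ t in l, t ∈ Set.Ico t₀ (t₀ + Tp) := by
    have h1 : ∀ᶠ t in l, t ∈ Set.Iio (t₀ + Tp) := self_mem_nhdsWithin
    have h2 : ∀ᶠ t in l, t ∈ Set.Ioi t₀ :=
      eventually_nhdsWithin_of_eventually_nhds (Ioi_mem_nhds hTp')
    filter_upwards [h1, h2] with t h1 h2
    exact ⟨le_of_lt h2, h1⟩
  -- lower bound on E via the r = 1 integral
  have hElb : ∀ t ∈ Set.Ico t₀ (t₀ + Tp),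
      Tp * Real.log Tp - Tp * Real.log (Tp + t₀ - t) ≤ E t := by
    intro t ht
    set F : ℝ → ℝ := fun s => -(Tp * Real.log (Tp + t₀ - s)) with hFdef
    have hF : ∀ τ ∈ Set.uIcc t₀ t, HasDerivAt F (Tp / (Tp + t₀ - τ)) τ := by
      intro τ hτ
      rw [Set.uIcc_of_le ht.1] at hτ
      have hd : 0 < Tp + t₀ - τ := hden τ (lt_of_le_of_lt hτ.2 ht.2)
      have h1 : HasDerivAt (fun s => Tp + t₀ - s) (-1) τ := by
        simpa using (hasDerivAt_id τ).const_sub (Tp + t₀)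
      have h2 := (h1.log (ne_of_gt hd)).const_mul Tp
      have h3 := h2.neg
      exact h3.congr_deriv (by ring)
    have hint1 : IntervalIntegrable (fun τ => Tp / (Tp + t₀ - τ))
        MeasureTheory.volume t₀ t := by
      apply ContinuousOn.intervalIntegrable_of_Icc ht.1
      intro s hs
      exact (ContinuousAt.div continuousAt_const (by fun_prop)
        (ne_of_gt (hden s (lt_of_le_of_lt hs.2 ht.2)))).continuousWithinAt
    have heq : (∫ τ in t₀..t, Tp / (Tp + t₀ - τ)) = F t - F t₀ :=
      intervalIntegral.integral_eq_sub_of_hasDerivAt hF hint1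
    have hFt₀ : F t₀ = -(Tp * Real.log Tp) := by
      simp [hFdef, show Tp + t₀ - t₀ = Tp by ring]
    have hmono : (∫ τ in t₀..t, Tp / (Tp + t₀ - τ)) ≤ E t := by
      apply intervalIntegral.integral_mono_on ht.1 hint1 (hTint t ht)
      intro s hs
      have hd : 0 < Tp + t₀ - s := hden s (lt_of_le_of_lt hs.2 ht.2)
      have hb : 1 ≤ Tp / (Tp + t₀ - s) := by
        rw [le_div_iff₀ hd]; linarith [hs.1]
      exact le_self_pow₀ hb hr.ne'
    calc Tp * Real.log Tp - Tp * Real.log (Tp + t₀ - t)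
        = F t - F t₀ := by rw [hFt₀]; simp [hFdef]; ring
      _ = ∫ τ in t₀..t, Tp / (Tp + t₀ - τ) := heq.symm
      _ ≤ E t := hmono
  -- E → atTop
  have hden_tendsto : Filter.Tendsto (fun t => Tp + t₀ - t) l (nhdsWithin 0 (Set.Ioi 0)) := by
    rw [tendsto_nhdsWithin_iff]
    constructor
    · have hc : Continuous (fun t : ℝ => Tp + t₀ - t) := by fun_prop
      have h0 : Filter.Tendsto (fun t => Tp + t₀ - t) (nhds (t₀ + Tp)) (nhds 0) := by
        have := hc.tendsto (t₀ + Tp)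
        simpa [show Tp + t₀ - (t₀ + Tp) = 0 by ring] using this
      exact h0.mono_left nhdsWithin_le_nhds
    · filter_upwards [self_mem_nhdsWithin] with t ht
      exact hden t ht
  have hlog : Filter.Tendsto (fun t => Real.log (Tp + t₀ - t)) l Filter.atBot :=
    Real.tendsto_log_nhdsGT_zero.comp hden_tendsto
  have hlb_atTop : Filter.Tendsto
      (fun t => Tp * Real.log Tp - Tp * Real.log (Tp + t₀ - t)) l Filter.atTop := by
    have h1 : Filter.Tendsto (fun t => Tp * Real.log (Tp + t₀ - t)) l Filter.atBot :=
      hlog.const_mul_atBot hTp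
    have h2 : Filter.Tendsto (fun t => -(Tp * Real.log (Tp + t₀ - t))) l Filter.atTop :=
      Filter.tendsto_neg_atBot_atTop.comp h1
    have := Filter.tendsto_atTop_add_const_left l (Tp * Real.log Tp) h2
    simpa [sub_eq_add_neg] using this
  have hE_atTop : Filter.Tendsto E l Filter.atTop := by
    apply Filter.tendsto_atTop_mono' l ?_ hlb_atTop
    filter_upwards [hIco_ev] with t ht
    exact hElb t ht
  -- bound tends to 0
  have hB0 : Filter.Tendsto
      (fun t => 2 / ν * Real.exp (-2 * σ * k * E t) * V t₀) l (nhds 0) := by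
    have h1 : Filter.Tendsto (fun t => -2 * σ * k * E t) l Filter.atBot := by
      have h2 : Filter.Tendsto (fun t => 2 * σ * k * E t) l Filter.atTop :=
        hE_atTop.const_mul_atTop (by positivity)
      have h3 : Filter.Tendsto (fun t => -(2 * σ * k * E t)) l Filter.atBot :=
        Filter.tendsto_neg_atTop_atBot.comp h2
      refine h3.congr fun t => by ring
    have h4 : Filter.Tendsto (fun t => Real.exp (-2 * σ * k * E t)) l (nhds 0) :=
      Real.tendsto_exp_atBot.comp h1
    have h5 := (h4.const_mul (2 / ν)).mul_const (V t₀)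
    simpa using h5
  -- squeeze: ‖x t - xstar‖ ^ 2 → 0
  have hsq : Filter.Tendsto (fun t => ‖x t - xstar‖ ^ 2) l (nhds 0) := by
    apply tendsto_of_tendsto_of_tendsto_of_le_of_le' tendsto_const_nhds hB0
    · filter_upwards with t
      positivity
    · filter_upwards [hIco_ev] with t ht
      exact hmain t ht
  have hnorm : Filter.Tendsto (fun t => ‖x t - xstar‖) l (nhds 0) := by
    have h1 := (Real.continuous_sqrt.tendsto 0).comp hsq
    simp only [Function.comp_def, Real.sqrt_zero] at h1
    refine h1.congr fun t => ?_
    rw [Real.sqrt_sq (norm_nonneg _)]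
  exact tendsto_iff_norm_sub_tendsto_zero.mpr hnorm
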